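/- Let G ≤ Aut(X_k^*) be a self-similar group. Suppose some g ∈ G satisfies: (1) σ_g is nontrivial of order n > 1; (2) there exists i ∈ X_k with σ_g(i) = i and g|_i = g; (3) there exists j ∈ X_k such that g^n|_j = g^m for some integer m with 0 < |m| < n. Then G is not contracting. -/
import Mathlib


/-!
Common framework: automorphisms of the rooted tree `X_k^*`, root permutations,
sections, self-similar and contracting groups, Hanoi automorphisms and Hanoi
groups, following Makisumi–Stadnyk–Steinhurst, "Modified Hanoi Towers Groups
and Limit Spaces".

A word `x_n … x_1` over the alphabet `X_k = Fin k` is encoded as the list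
`[x_n, …, x_1]`, whose head `x_n` is the first letter, i.e. the letter that a
tree automorphism reads (and permutes) first.
-/

namespace Hanoi

/-- Words over the alphabet `X_k = Fin k`. -/
abbrev Word (k : ℕ) := List (Fin k)

/-- `e` is an automorphism of the rooted tree `X_k^*`: it fixes the root
(the empty word), preserves word length (levels) and preserves the tree
structure (words sharing an initial segment of length `n` are sent to words
sharing an initial segment of length `n`). -/
def IsTreeAut {k : ℕ} (e : Equiv.Perm (Word k)) : Prop :=
  (∀ w : Word k, (e w).length = w.length) ∧
    ∀ (w v : Word k) (n : ℕ), w.take n = v.take n → (e w).take n = (e v).take n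

open Classical in
/-- The root permutation `σ_e` of a tree automorphism `e` (its action on
one-letter words). -/
noncomputable def rootPerm {k : ℕ} (e : Equiv.Perm (Word k)) : Equiv.Perm (Fin k) :=
  if h : Function.Bijective (fun x : Fin k => ((e [x]).head?.getD x)) then
    Equiv.ofBijective _ h
  else 1

open Classical in
/-- The section `e|_x` of `e` at a letter `x`: the unique automorphism with
`e (x :: w) = σ_e x :: (e|_x) w` for all words `w`. -/
noncomputable def sec {k : ℕ} (e : Equiv.Perm (Word k)) (x : Fin k) : Equiv.Perm (Word k) :=
  if h : Function.Bijective (fun w : Word k => (e (x :: w)).tail) then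
    Equiv.ofBijective _ h
  else 1

/-- The section `e|_v` of `e` at a word `v = x_n … x_1`, defined by
`e|_v = (e|_{x_n})|_{x_{n-1} … x_1}`. -/
noncomputable def secW {k : ℕ} (e : Equiv.Perm (Word k)) : Word k → Equiv.Perm (Word k)
  | [] => e
  | x :: v => secW (sec e x) v

/-- A subgroup of the permutations of `X_k^*` is self-similar if it consists of
tree automorphisms and is closed under taking sections. -/
def IsSelfSimilar {k : ℕ} (G : Subgroup (Equiv.Perm (Word k))) : Prop :=
  (∀ g ∈ G, IsTreeAut g) ∧ ∀ g ∈ G, ∀ x : Fin k, sec g x ∈ G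

/-- A self-similar group `G` is contracting if there is a finite subset `N ⊆ G`
such that for every `g ∈ G` all sections of `g` at words of length at least
some `m` lie in `N`. -/
def IsContracting {k : ℕ} (G : Subgroup (Equiv.Perm (Word k))) : Prop :=
  ∃ N : Set (Equiv.Perm (Word k)), N.Finite ∧ N ⊆ (G : Set (Equiv.Perm (Word k))) ∧
    ∀ g ∈ G, ∃ m : ℕ, ∀ v : Word k, m ≤ v.length → secW g v ∈ N

/-- `N` is the nucleus of `G`: a smallest finite subset of `G` catching all
deep enough sections of every element of `G`. -/
def IsNucleus {k : ℕ} (G : Subgroup (Equiv.Perm (Word k)))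
    (N : Set (Equiv.Perm (Word k))) : Prop :=
  (N.Finite ∧ N ⊆ (G : Set (Equiv.Perm (Word k))) ∧
    ∀ g ∈ G, ∃ m : ℕ, ∀ v : Word k, m ≤ v.length → secW g v ∈ N) ∧
  ∀ N' : Set (Equiv.Perm (Word k)), N'.Finite → N' ⊆ (G : Set (Equiv.Perm (Word k))) →
    (∀ g ∈ G, ∃ m : ℕ, ∀ v : Word k, m ≤ v.length → secW g v ∈ N') → N ⊆ N'

/-- `a` is a Hanoi automorphism with set of inactive pegs `Q`: the section at
each active peg (element of the complement of `Q`) is trivial, the section at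
each inactive peg is `a` itself, and the root permutation fixes each inactive
peg. -/
def IsHanoiWith {k : ℕ} (a : Equiv.Perm (Word k)) (Q : Set (Fin k)) : Prop :=
  IsTreeAut a ∧ (∀ i ∉ Q, sec a i = 1) ∧ (∀ j ∈ Q, sec a j = a) ∧
    ∀ j ∈ Q, rootPerm a j = j

/-- `a` is a `k`-peg Hanoi automorphism. -/
def IsHanoiAut {k : ℕ} (a : Equiv.Perm (Word k)) : Prop := ∃ Q, IsHanoiWith a Q

open Classical in
/-- The set `Q_a` of inactive pegs of a Hanoi automorphism `a`; by convention
`Q_1 = X_k` (for `a ≠ 1` the set of inactive pegs is uniquely determined). -/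
noncomputable def inactivePegs {k : ℕ} (a : Equiv.Perm (Word k)) : Set (Fin k) :=
  if a = 1 then Set.univ
  else if h : ∃ Q, IsHanoiWith a Q then h.choose else ∅

/-- `S_{k,q}`: the set of Hanoi automorphisms over `X_k` with exactly `q`
inactive pegs. -/
noncomputable def hanoiSet (k q : ℕ) : Set (Equiv.Perm (Word k)) :=
  {a | IsHanoiAut a ∧ (inactivePegs a).ncard = q}

/-- `L = [s_n, …, s_1]` is a representation of `g` over the generating set `S`:
each `s_i ∈ S ∪ S⁻¹` and `g = s_n ⋯ s_2 s_1`. -/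
def IsRepOf {k : ℕ} (S : Set (Equiv.Perm (Word k))) (L : List (Equiv.Perm (Word k)))
    (g : Equiv.Perm (Word k)) : Prop :=
  (∀ s ∈ L, s ∈ S ∨ s⁻¹ ∈ S) ∧ L.prod = g

/-- The length `l(g)` of `g` with respect to `S`: the length of a minimal
representation (`0` for the identity). -/
noncomputable def repLength {k : ℕ} (S : Set (Equiv.Perm (Word k)))
    (g : Equiv.Perm (Word k)) : ℕ :=
  sInf {n | ∃ L, IsRepOf S L g ∧ L.length = n}

/-- The essential set of a representation: the intersection of the sets of
inactive pegs of its letters. -/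
noncomputable def essSet {k : ℕ} (L : List (Equiv.Perm (Word k))) : Set (Fin k) :=
  ⋂ s ∈ L, inactivePegs s

/-- The prenucleus of `G`: the set of elements `g ∈ G` with `g|_j = g` for some
letter `j`. -/
noncomputable def preNucleus {k : ℕ} (G : Subgroup (Equiv.Perm (Word k))) :
    Set (Equiv.Perm (Word k)) :=
  {g | g ∈ G ∧ ∃ j : Fin k, sec g j = g}

/-- The underlying function of the Hanoi Towers move `a_{ij}`: it changes the
first occurrence of `i` or `j` in a word by means of the transposition `(i j)`
and leaves the rest of the word unchanged. -/
def hanoiMoveFun {k : ℕ} (i j : Fin k) : Word k → Word k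
  | [] => []
  | x :: w => if x = i ∨ x = j then Equiv.swap i j x :: w else x :: hanoiMoveFun i j w

theorem hanoiMoveFun_involutive {k : ℕ} (i j : Fin k) :
    Function.Involutive (hanoiMoveFun i j) := by
  intro w
  induction w with
  | nil => rfl
  | cons x t ih =>
    by_cases h : x = i ∨ x = j
    · have h2 : Equiv.swap i j x = i ∨ Equiv.swap i j x = j := by
        rcases h with h | h <;> subst h <;> simp
      simp only [hanoiMoveFun, if_pos h, if_pos h2, Equiv.swap_apply_self]
    · simp only [hanoiMoveFun, if_neg h, ih]

/-- The Hanoi Towers move `a_{ij}`, as a permutation of `X_k^*`: its root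
permutation is the transposition `(i j)`, its sections at `i` and `j` are
trivial and all its other sections equal `a_{ij}` itself. -/
def hanoiMove {k : ℕ} (i j : Fin k) : Equiv.Perm (Word k) :=
  (hanoiMoveFun_involutive i j).toPerm

/-- The orbit of the letter `j` under the subgroup of `Sym(X_k)` generated by
the root permutations of the elements of `T`. -/
noncomputable def orbT {k : ℕ} (T : Finset (Equiv.Perm (Word k))) (j : Fin k) : Set (Fin k) :=
  MulAction.orbit (Subgroup.closure ((fun a => rootPerm a) '' (T : Set (Equiv.Perm (Word k))))) j

/-- The set `Fix(T)` of letters fixed by the root permutation of every element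
of `T`. -/
noncomputable def fixT {k : ℕ} (T : Finset (Equiv.Perm (Word k))) : Set (Fin k) :=
  {x | ∀ s ∈ T, rootPerm s x = x}

/-- Condition (*) on a generating set `S` of Hanoi automorphisms: for every
finite `T ⊆ S` with nonempty essential set and every letter `j ∉ Fix(T)`,
the orbit of `j` misses the inactive pegs of some element of `T`. -/
noncomputable def CondStar {k : ℕ} (S : Set (Equiv.Perm (Word k))) : Prop :=
  ∀ T : Finset (Equiv.Perm (Word k)), (T : Set (Equiv.Perm (Word k))) ⊆ S →
    (⋂ s ∈ T, inactivePegs s).Nonempty →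
    ∀ j : Fin k, j ∉ fixT T →
      ∃ s ∈ T, orbT T j ∩ inactivePegs s = ∅

open Classical in
/-- `d(g)`: the least number of distinct generators occurring among all
representations of `g` having nonempty essential set. -/
noncomputable def dCount {k : ℕ} (S : Set (Equiv.Perm (Word k)))
    (g : Equiv.Perm (Word k)) : ℕ :=
  sInf {M | ∃ L, IsRepOf S L g ∧ (essSet L).Nonempty ∧ L.toFinset.card = M}

/-- `S` is fully symmetric: for every non-identity `a ∈ S` and every
`φ ∈ Sym(X_k)`, the Hanoi automorphism `φ·a` with inactive pegs `φ(Q_a)` and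
root permutation `φ ∘ σ_a ∘ φ⁻¹` again lies in `S`. -/
noncomputable def FullySymmetric {k : ℕ} (S : Set (Equiv.Perm (Word k))) : Prop :=
  ∀ a ∈ S, a ≠ 1 → ∀ φ : Equiv.Perm (Fin k), ∀ b : Equiv.Perm (Word k),
    IsHanoiWith b (φ '' inactivePegs a) →
    rootPerm b = φ * rootPerm a * φ⁻¹ → b ∈ S

/-- The family `R̲_{k,n}`: the identity together with all Hanoi automorphisms
`a` such that (1) `Q_a ⊆ {m+1, …, m+n}` for some `m`, and (2) whenever
`i ∈ Q_a` the root permutation of `a` fixes `i-1, …, i-(n-1)`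
(all peg labels mod `k`). -/
noncomputable def Runder (k n : ℕ) : Set (Equiv.Perm (Word k)) :=
  {a | a = 1 ∨ (IsHanoiAut a ∧
    (∃ m : Fin k, ∀ q ∈ inactivePegs a, ∃ t : ℕ, 1 ≤ t ∧ t ≤ n ∧
      (q : ℕ) = ((m : ℕ) + t) % k) ∧
    ∀ i ∈ inactivePegs a, ∀ x : Fin k, ∀ t : ℕ, 1 ≤ t → t ≤ n - 1 →
      ((x : ℕ) + t) % k = (i : ℕ) → rootPerm a x = x)}

/-- The family `R̄_{k,n}`: the identity together with all Hanoi automorphisms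
`a` such that (1) `Q_a ⊆ {m+1, …, m+n}` for some `m`, and (2) whenever
`i ∈ Q_a` the root permutation of `a` fixes `i+1, …, i+(n-1)`
(all peg labels mod `k`). -/
noncomputable def Rover (k n : ℕ) : Set (Equiv.Perm (Word k)) :=
  {a | a = 1 ∨ (IsHanoiAut a ∧
    (∃ m : Fin k, ∀ q ∈ inactivePegs a, ∃ t : ℕ, 1 ≤ t ∧ t ≤ n ∧
      (q : ℕ) = ((m : ℕ) + t) % k) ∧
    ∀ i ∈ inactivePegs a, ∀ x : Fin k, ∀ t : ℕ, 1 ≤ t → t ≤ n - 1 →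
      (x : ℕ) = ((i : ℕ) + t) % k → rootPerm a x = x)}

/-- The finite word `x_m … x_1` (first letter `x_m`) read off from a
left-infinite sequence `… x_2 x_1`, encoded as `x : ℕ → Fin k` with
`x s = x_{s+1}`. -/
def wordOf {k : ℕ} (x : ℕ → Fin k) (m : ℕ) : Word k := (List.range m).reverse.map x

section Aux

variable {k : ℕ} {e a b : Equiv.Perm (Word k)}

/-- Auxiliary: the underlying function of the root permutation. -/
def fe (e : Equiv.Perm (Word k)) (x : Fin k) : Fin k := (e [x]).head?.getD x

lemma e_single (he : IsTreeAut e) (x : Fin k) : e [x] = [fe e x] := by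
  have h1 : (e [x]).length = 1 := by simpa using he.1 [x]
  obtain ⟨y, hy⟩ := List.length_eq_one_iff.mp h1
  simp [fe, hy]

lemma e_cons (he : IsTreeAut e) (x : Fin k) (w : Word k) :
    e (x :: w) = fe e x :: (e (x :: w)).tail := by
  have h1 : (e (x :: w)).length = w.length + 1 := by simpa using he.1 (x :: w)
  obtain ⟨y, t, hyt⟩ : ∃ y t, e (x :: w) = y :: t := by
    cases hne : e (x :: w) with
    | nil => rw [hne] at h1; simp at h1
    | cons y t => exact ⟨y, t, rfl⟩
  have h2 : (e (x :: w)).take 1 = (e [x]).take 1 :=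
    he.2 (x :: w) [x] 1 (by simp)
  rw [hyt, e_single he] at h2
  simp only [List.take_succ_cons, List.take_zero] at h2
  rw [hyt]
  simpa using h2

lemma fe_injective (he : IsTreeAut e) : Function.Injective (fe e) := by
  intro x y hxy
  have : e [x] = e [y] := by rw [e_single he, e_single he, hxy]
  have := e.injective this
  simpa using this

lemma fe_bijective (he : IsTreeAut e) :
    Function.Bijective (fun x : Fin k => ((e [x]).head?.getD x)) :=
  (Finite.injective_iff_bijective).mp (fe_injective he)

lemma rootPerm_apply (he : IsTreeAut e) (x : Fin k) : rootPerm e x = fe e x := by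
  rw [rootPerm, dif_pos (fe_bijective he)]; rfl

lemma sec_fun_bijective (he : IsTreeAut e) (x : Fin k) :
    Function.Bijective (fun w : Word k => (e (x :: w)).tail) := by
  constructor
  · intro w w' hww'
    have h1 : e (x :: w) = e (x :: w') := by
      rw [e_cons he, e_cons he x w']
      simp only at hww'
      rw [hww']
    have := e.injective h1
    simpa using this
  · intro u
    set v := e.symm (fe e x :: u) with hv
    have hev : e v = fe e x :: u := by rw [hv, Equiv.apply_symm_apply]
    have hlen : v.length = u.length + 1 := by
      have := he.1 v
      rw [hev] at this
      simpa using this.symm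
    obtain ⟨z, v', hzv⟩ : ∃ z v', v = z :: v' := by
      cases hne : v with
      | nil => rw [hne] at hlen; simp at hlen
      | cons z v' => exact ⟨z, v', rfl⟩
    have h2 : fe e z :: (e (z :: v')).tail = fe e x :: u := by
      rw [← e_cons he, ← hzv, hev]
    have hz : z = x := fe_injective he (by exact (List.cons.injEq _ _ _ _ ▸ h2).1)
    refine ⟨v', ?_⟩
    simp only
    rw [← hz]
    have := (List.cons.injEq _ _ _ _ ▸ h2).2
    exact this

lemma sec_apply (he : IsTreeAut e) (x : Fin k) (w : Word k) :
    sec e x w = (e (x :: w)).tail := by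
  rw [sec, dif_pos (sec_fun_bijective he x)]; rfl

lemma e_cons' (he : IsTreeAut e) (x : Fin k) (w : Word k) :
    e (x :: w) = rootPerm e x :: sec e x w := by
  rw [rootPerm_apply he, sec_apply he, ← e_cons he]

lemma isTreeAut_mul (ha : IsTreeAut a) (hb : IsTreeAut b) : IsTreeAut (a * b) := by
  constructor
  · intro w
    rw [Equiv.Perm.mul_apply, ha.1, hb.1]
  · intro w v nn h
    rw [Equiv.Perm.mul_apply, Equiv.Perm.mul_apply]
    exact ha.2 _ _ _ (hb.2 _ _ _ h)

lemma isTreeAut_one : IsTreeAut (1 : Equiv.Perm (Word k)) := by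
  constructor <;> intros <;> simp_all [Equiv.Perm.one_apply]

lemma rootPerm_one : rootPerm (1 : Equiv.Perm (Word k)) = 1 := by
  ext x
  rw [rootPerm_apply isTreeAut_one]
  simp [fe, Equiv.Perm.one_apply]

lemma sec_one (x : Fin k) : sec (1 : Equiv.Perm (Word k)) x = 1 := by
  ext w
  rw [sec_apply isTreeAut_one]
  simp [Equiv.Perm.one_apply]

lemma rootPerm_mul (ha : IsTreeAut a) (hb : IsTreeAut b) :
    rootPerm (a * b) = rootPerm a * rootPerm b := by
  ext x
  rw [Equiv.Perm.mul_apply, rootPerm_apply (isTreeAut_mul ha hb),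
    rootPerm_apply ha, rootPerm_apply hb]
  have : (a * b) [x] = [fe a (fe b x)] := by
    rw [Equiv.Perm.mul_apply, e_single hb, e_single ha]
  simp [fe, this]

lemma sec_mul (ha : IsTreeAut a) (hb : IsTreeAut b) (x : Fin k) :
    sec (a * b) x = sec a (rootPerm b x) * sec b x := by
  ext w
  rw [Equiv.Perm.mul_apply, sec_apply (isTreeAut_mul ha hb), Equiv.Perm.mul_apply,
    e_cons' hb, sec_apply ha]

lemma secW_replicate {i : Fin k} (h : sec a i = a) :
    ∀ s : ℕ, secW a (List.replicate s i) = a := by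
  intro s
  induction s with
  | zero => rfl
  | succ s ih => rw [List.replicate_succ, secW, h, ih]

end Aux

/-- Lemma: a sufficient condition for non-contraction.
Let `G` be a self-similar group and suppose `g ∈ G` satisfies: (1) `σ_g` is
nontrivial of order `n > 1`; (2) there is a letter `i` fixed by `σ_g` with
`g|_i = g`; (3) there is a letter `j` with `g^n|_j = g^m` for some integer `m`
with `0 < |m| < n`.  Then `G` is not contracting. -/
theorem noncontraction_condition {k : ℕ} (G : Subgroup (Equiv.Perm (Word k)))
    (hG : IsSelfSimilar G) (g : Equiv.Perm (Word k)) (hg : g ∈ G)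
    (n : ℕ) (hn : 1 < n) (hσ : rootPerm g ≠ 1) (hord : orderOf (rootPerm g) = n)
    (i : Fin k) (hfix : rootPerm g i = i) (hsec : sec g i = g)
    (j : Fin k) (m : ℤ) (hm0 : 0 < |m|) (hmn : |m| < (n : ℤ))
    (hj : sec (g ^ n) j = g ^ m) :
    ¬ IsContracting G := by
  rintro ⟨N, hNfin, hNG, hNall⟩
  have hTA : ∀ h ∈ G, IsTreeAut h := hG.1
  have hgTA : IsTreeAut g := hTA g hg
  -- root permutations of powers
  have rootPerm_pow : ∀ t : ℕ, rootPerm (g ^ t) = rootPerm g ^ t := by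
    intro t
    induction t with
    | zero => simpa using rootPerm_one
    | succ t ih =>
      rw [pow_succ, rootPerm_mul (hTA _ (pow_mem hg t)) hgTA, ih, pow_succ]
  -- sections of powers at i
  have hsecpow : ∀ t : ℕ, sec (g ^ t) i = g ^ t := by
    intro t
    induction t with
    | zero => simpa using sec_one i
    | succ t ih =>
      rw [pow_succ, sec_mul (hTA _ (pow_mem hg t)) hgTA, hfix, ih, hsec]
  -- all powers of g lie in N
  have hpowN : ∀ t : ℕ, g ^ t ∈ N := by
    intro t
    obtain ⟨mt, hmt⟩ := hNall (g ^ t) (pow_mem hg t)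
    have := hmt (List.replicate mt i) (by simp)
    rwa [secW_replicate (hsecpow t)] at this
  -- g has finite order
  have : Finite N := hNfin.to_subtype
  obtain ⟨s, t, hst, hpow⟩ :=
    Finite.exists_ne_map_eq_of_infinite (fun t : ℕ => (⟨g ^ t, hpowN t⟩ : N))
  have hpow' : g ^ s = g ^ t := congrArg Subtype.val hpow
  have hfin : IsOfFinOrder g := by
    rcases hst.lt_or_gt with h | h
    · refine isOfFinOrder_iff_pow_eq_one.mpr ⟨t - s, Nat.sub_pos_of_lt h, ?_⟩
      have : g ^ (t - s) * g ^ s = g ^ t := by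
        rw [← pow_add, Nat.sub_add_cancel h.le]
      rw [hpow'] at this
      exact mul_right_cancel (by rw [this, one_mul])
    · refine isOfFinOrder_iff_pow_eq_one.mpr ⟨s - t, Nat.sub_pos_of_lt h, ?_⟩
      have : g ^ (s - t) * g ^ t = g ^ s := by
        rw [← pow_add, Nat.sub_add_cancel h.le]
      rw [← hpow'] at this
      exact mul_right_cancel (by rw [this, one_mul])
  set d := orderOf g with hd
  have hd0 : 0 < d := hfin.orderOf_pos
  -- n divides d
  have hrpd : rootPerm g ^ d = 1 := by
    rw [← rootPerm_pow d, pow_orderOf_eq_one g, rootPerm_one]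
  have hnd : n ∣ d := hord ▸ orderOf_dvd_of_pow_eq_one hrpd
  set t0 := d / n with ht0
  have hnt0 : n * t0 = d := Nat.mul_div_cancel' hnd
  have ht0pos : 0 < t0 := by
    rcases Nat.eq_zero_or_pos t0 with h | h
    · rw [h, Nat.mul_zero] at hnt0; omega
    · exact h
  -- root perm of g^n is trivial
  have hrpn : rootPerm (g ^ n) = 1 := by
    rw [rootPerm_pow n, ← hord, pow_orderOf_eq_one]
  -- sections of powers of g^n at j
  have hsecn : ∀ s : ℕ, sec ((g ^ n) ^ s) j = g ^ ((s : ℤ) * m) := by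
    intro s
    induction s with
    | zero => simpa using sec_one j
    | succ s ih =>
      have h1 : IsTreeAut ((g ^ n) ^ s) := hTA _ (pow_mem (pow_mem hg n) s)
      have h2 : IsTreeAut (g ^ n) := hTA _ (pow_mem hg n)
      have hjfix : rootPerm (g ^ n) j = j := by rw [hrpn]; rfl
      rw [pow_succ, sec_mul h1 h2, hjfix, ih, hj, ← zpow_add]
      congr 1
      push_cast
      ring
  have hone : (g ^ n) ^ t0 = 1 := by
    rw [← pow_mul, hnt0, hd, pow_orderOf_eq_one]
  have hz : g ^ ((t0 : ℤ) * m) = 1 := by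
    rw [← hsecn t0, hone, sec_one]
  have hdvd : (d : ℤ) ∣ (t0 : ℤ) * m := orderOf_dvd_iff_zpow_eq_one.mpr hz
  have hdvd' : (t0 : ℤ) * (n : ℤ) ∣ (t0 : ℤ) * m := by
    rw [mul_comm]
    rw [← hnt0] at hdvd
    exact_mod_cast hdvd
  have ht0z : (t0 : ℤ) ≠ 0 := by exact_mod_cast ht0pos.ne'
  have hnm : (n : ℤ) ∣ m := (mul_dvd_mul_iff_left ht0z).mp hdvd'
  have : (n : ℤ) ≤ |m| := Int.le_of_dvd hm0 ((dvd_abs _ _).mpr hnm)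
  omega

end Hanoi
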